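/- The sequence \{1/k!\}_{k \ge 0} is a multiplier sequence: for every real polynomial \sum_{k=0}^m a_k x^k with only real zeros, the polynomial \sum_{k=0}^m \frac{a_k}{k!} x^k is either identically zero or has only real zeros. -/

import Mathlib

open Polynomial Finset Filter Topology

theorem aux_sum_count_le (S : Finset ℝ) (M : Multiset ℝ) :
    ∑ x ∈ S, M.count x ≤ Multiset.card M := by
  classical
  calc ∑ x ∈ S, M.count x ≤ ∑ x ∈ S ∪ M.toFinset, M.count x :=
        Finset.sum_le_sum_of_subset Finset.subset_union_left
    _ = ∑ x ∈ M.toFinset, M.count x := by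
        refine (Finset.sum_subset Finset.subset_union_right ?_).symm
        intro x _ hx
        simpa [Multiset.count_eq_zero] using fun hmem => hx (Multiset.mem_toFinset.2 hmem)
    _ = Multiset.card M := Multiset.toFinset_sum_count_eq M

theorem aux_hasDerivAt (f : ℝ[X]) (r x : ℝ) :
    HasDerivAt (fun t => Real.exp (-r * t) * f.eval t)
      (Real.exp (-r * x) * (derivative f - C r * f).eval x) x := by
  have h1 : HasDerivAt (fun t : ℝ => Real.exp (-r * t)) (-r * Real.exp (-r * x)) x := by
    have := (Real.hasDerivAt_exp (-r * x)).comp x ((hasDerivAt_id x).const_mul (-r))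
    refine this.congr_deriv ?_ |>.congr_of_eventuallyEq ?_
    · ring
    · filter_upwards with t; simp [Function.comp, mul_comm]
  have h2 := f.hasDerivAt x
  have := h1.fun_mul h2
  refine this.congr_deriv ?_
  simp [eval_sub, eval_mul, eval_C]
  ring

theorem aux_tendsto (f : ℝ[X]) (r : ℝ) (hr : 0 < r) :
    Tendsto (fun t => Real.exp (-r * t) * f.eval t) atTop (𝓝 0) := by
  have h1 := (f.comp (C r⁻¹ * X)).tendsto_div_exp_atTop
  have h2 : Tendsto (fun t : ℝ => r * t) atTop atTop :=
    Filter.Tendsto.const_mul_atTop hr tendsto_id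
  have := h1.comp h2
  refine this.congr fun t => ?_
  simp only [Function.comp_apply, eval_comp, eval_mul, eval_C, eval_X]
  rw [inv_mul_cancel_left₀ hr.ne', neg_mul, Real.exp_neg]
  ring

theorem aux_rolle (f : ℝ[X]) (r x y : ℝ) (hxy : x < y) (hx : f.eval x = 0) (hy : f.eval y = 0) :
    ∃ z ∈ Set.Ioo x y, (derivative f - C r * f).eval z = 0 := by
  obtain ⟨c, hc, hc0⟩ := exists_hasDerivAt_eq_zero hxy
    (Continuous.continuousOn ((Real.continuous_exp.comp (continuous_const.mul continuous_id)).mul f.continuous_aeval))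
    (by simp [hx, hy])
    (fun t _ => aux_hasDerivAt f r t)
  exact ⟨c, hc, by
    rcases mul_eq_zero.1 hc0 with h | h
    · exact absurd h (Real.exp_ne_zero _)
    · exact h⟩
theorem aux_no_pos (f : ℝ[X]) (r b : ℝ) (hr : 0 < r) (hb : f.eval b = 0)
    (hpos : ∀ c, b < c → 0 < (derivative f - C r * f).eval c) : False := by
  set F : ℝ → ℝ := fun t => Real.exp (-r * t) * f.eval t with hF
  have hcont : Continuous F :=
    (Real.continuous_exp.comp (continuous_const.mul continuous_id)).mul f.continuous_aeval
  have hmono : StrictMonoOn F (Set.Ici b) := by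
    refine strictMonoOn_of_deriv_pos (convex_Ici b) hcont.continuousOn ?_
    intro x hx
    rw [interior_Ici] at hx
    rw [(aux_hasDerivAt f r x).deriv]
    exact mul_pos (Real.exp_pos _) (hpos x hx)
  have hFb : F b = 0 := by simp [hF, hb]
  have hε : 0 < F (b + 1) := by
    have := hmono (Set.self_mem_Ici) (by simp : b + 1 ∈ Set.Ici b) (by linarith)
    simpa [hFb] using this
  have hev : ∀ᶠ t in atTop, F t < F (b + 1) :=
    (aux_tendsto f r hr).eventually_lt_const hε
  obtain ⟨t, ht1, ht2⟩ := (hev.and (eventually_ge_atTop (b + 2))).exists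
  have : F (b + 1) < F t :=
    hmono (by simp : b + 1 ∈ Set.Ici b) (by simp only [Set.mem_Ici]; linarith) (by linarith)
  linarith

theorem aux_exists_beyond (f : ℝ[X]) (r b : ℝ) (hr : 0 < r) (hb : f.eval b = 0) :
    ∃ c, b < c ∧ (derivative f - C r * f).eval c = 0 := by
  by_contra hcon
  push_neg at hcon
  set g := derivative f - C r * f with hg
  have hne : ∀ c, b < c → g.eval c ≠ 0 := fun c hc => hcon c hc
  have hdichot : (∀ c, b < c → 0 < g.eval c) ∨ (∀ c, b < c → g.eval c < 0) := by
    by_cases hpos : ∀ c, b < c → 0 < g.eval c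
    · exact Or.inl hpos
    · push_neg at hpos
      obtain ⟨u, hu, hu0⟩ := hpos
      have hu0' : g.eval u < 0 := lt_of_le_of_ne hu0 (hne u hu)
      right
      intro c hc
      by_contra hc0
      have hc0' : 0 < g.eval c := lt_of_le_of_ne (not_lt.1 hc0) (Ne.symm (hne c hc))
      have hmem : (0:ℝ) ∈ Set.uIcc (g.eval u) (g.eval c) :=
        Set.mem_uIcc.2 (Or.inl ⟨hu0'.le, hc0'.le⟩)
      have := intermediate_value_uIcc (g.continuous_aeval.continuousOn
        (s := Set.uIcc u c)) hmem
      obtain ⟨z, hz, hz0⟩ := this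
      have hz' : min u c ≤ z := by
        rcases Set.mem_uIcc.1 hz with h | h
        · exact le_trans (min_le_left _ _) h.1
        · exact le_trans (min_le_right _ _) h.1
      have hzb : b < z := lt_of_lt_of_le (lt_min hu hc) hz'
      exact hne z hzb hz0
  rcases hdichot with hpos | hneg
  · exact aux_no_pos f r b hr hb hpos
  · refine aux_no_pos (-f) r b hr (by simp [hb]) ?_
    intro c hc
    have : (derivative (-f) - C r * (-f)) = -g := by simp [hg]; ring
    rw [this]
    simpa using hneg c hc
theorem aux_real_roots_of_splits (f : ℝ[X]) (hf : f ≠ 0) (hs : f.Splits) :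
    ∀ z : ℂ, aeval z f = 0 → z.im = 0 := by
  intro z hz
  have hfact := hs.eq_prod_roots
  rw [hfact] at hz
  rw [map_mul, map_multiset_prod] at hz
  rcases mul_eq_zero.1 hz with h | h
  · exfalso
    rw [aeval_C] at h
    exact leadingCoeff_ne_zero.2 hf (by exact_mod_cast (_root_.map_eq_zero (algebraMap ℝ ℂ)).1 h)
  · rw [Multiset.prod_eq_zero_iff] at h
    rw [Multiset.map_map] at h
    obtain ⟨t, ht, h0⟩ := Multiset.mem_map.1 h
    simp only [Function.comp_apply, map_sub, aeval_X, aeval_C] at h0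
    have : z = algebraMap ℝ ℂ t := by linear_combination h0
    rw [this]
    simp

theorem aux_splits_of_real_roots (f : ℝ[X]) (hf : f ≠ 0)
    (h : ∀ z : ℂ, aeval z f = 0 → z.im = 0) : f.Splits := by
  generalize hn : f.natDegree = n
  induction n using Nat.strong_induction_on generalizing f with
  | _ n ih =>
  rcases Nat.eq_zero_or_pos n with h0 | hpos
  · subst h0
    exact Splits.of_natDegree_le_one (by omega)
  · have hdeg : 0 < (f.map (algebraMap ℝ ℂ)).degree := by
      rw [degree_map]
      rw [degree_eq_natDegree hf, hn]; exact_mod_cast hpos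
    obtain ⟨z, hz⟩ := Complex.exists_root hdeg
    have hz' : aeval z f = 0 := by rwa [IsRoot, eval_map_algebraMap] at hz
    have him := h z hz'
    have hzx : z = ((z.re : ℝ) : ℂ) := Complex.ext rfl (by simp [him])
    have hroot : f.IsRoot z.re := by
      have : aeval ((z.re : ℝ) : ℂ) f = 0 := by rw [← hzx]; exact hz'
      rw [show ((z.re : ℝ) : ℂ) = algebraMap ℝ ℂ z.re from rfl,
        aeval_algebraMap_apply] at this
      simpa using (_root_.map_eq_zero (algebraMap ℝ ℂ)).1 (by simpa using this)
    obtain ⟨g, hg⟩ := (dvd_iff_isRoot).2 hroot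
    have hgne : g ≠ 0 := fun h0 => hf (by rw [hg, h0, mul_zero])
    have hdegg : g.natDegree = n - 1 := by
      have := natDegree_mul (X_sub_C_ne_zero z.re) hgne
      rw [← hg, hn, natDegree_X_sub_C] at this
      omega
    have hgroots : ∀ w : ℂ, aeval w g = 0 → w.im = 0 := by
      intro w hw
      refine h w ?_
      rw [hg, map_mul, hw, mul_zero]
    have := ih (n - 1) (by omega) g hgne hgroots hdegg
    rw [hg]
    exact Splits.mul (Splits.X_sub_C _) this
theorem aux_core_pos (f : ℝ[X]) (r : ℝ) (hr : 0 < r) (hf : f ≠ 0)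
    (hs : f.Splits) :
    (derivative f - C r * f) ≠ 0 ∧ (derivative f - C r * f).Splits := by
  classical
  set g := derivative f - C r * f with hgdef
  rcases Nat.eq_zero_or_pos f.natDegree with h0 | hpos
  · -- constant case
    obtain ⟨c, rfl⟩ := natDegree_eq_zero.1 h0
    have hc : c ≠ 0 := fun h => hf (by rw [h, map_zero])
    have hgc : g = C (-(r * c)) := by
      rw [hgdef, derivative_C, zero_sub, ← C_mul, ← C_neg]
    refine ⟨?_, by rw [hgc]; exact Splits.C _⟩
    rw [hgc]
    intro hzero
    rw [C_eq_zero] at hzero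
    exact hc (by
      have : r * c = 0 := by linarith [neg_eq_zero.1 hzero]
      rcases mul_eq_zero.1 this with h | h
      · exact absurd h hr.ne'
      · exact h)
  -- nonconstant case
  have hdegC : (C r * f).degree = f.degree := by
    rw [degree_mul, degree_C hr.ne']; simp
  have hdlt : (derivative f).degree < (C r * f).degree := by
    rw [hdegC]; exact degree_derivative_lt hf
  have hdeg : g.degree = f.degree := by
    rw [hgdef, sub_eq_add_neg, degree_add_eq_right_of_degree_lt (by rwa [degree_neg]),
      degree_neg, hdegC]
  have hgne : g ≠ 0 := by
    intro h0
    rw [h0, degree_zero] at hdeg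
    exact hf (degree_eq_bot.1 hdeg.symm)
  refine ⟨hgne, ?_⟩
  have hnatdeg : g.natDegree = f.natDegree := natDegree_eq_of_degree_eq hdeg
  -- root counting
  have hcardf : Multiset.card f.roots = f.natDegree := splits_iff_card_roots.1 hs
  rw [splits_iff_card_roots]
  refine le_antisymm (card_roots' g) ?_
  set T : Finset ℝ := f.roots.toFinset with hT
  set Z : Finset ℝ := g.roots.toFinset with hZ
  have hTne : T.Nonempty := by
    obtain ⟨x, hx⟩ := Multiset.card_pos_iff_exists_mem.1 (by omega : 0 < Multiset.card f.roots)
    exact ⟨x, Multiset.mem_toFinset.2 hx⟩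
  -- the point beyond the max root
  set b : ℝ := T.max' hTne with hb
  have hTroot : ∀ x ∈ T, f.eval x = 0 := by
    intro x hx
    rw [hT, Multiset.mem_toFinset, mem_roots hf] at hx
    exact hx
  have hbroot : f.eval b = 0 := hTroot _ (T.max'_mem hTne)
  obtain ⟨c, hcb, hc0⟩ := aux_exists_beyond f r b hr hbroot
  have hcZ : c ∈ Z := Multiset.mem_toFinset.2 (by rw [mem_roots hgne]; exact hc0)
  have hle : ∀ x ∈ T, x ≤ b := fun x hx => T.le_max' x hx
  have hcT : c + 1 ∉ T := fun hmem => absurd (hle _ hmem) (by linarith)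
  -- interleaving
  have hinterleave : T.card ≤ (Z \ T).card := by
    have key : (insert (c + 1) T).card ≤ (Z \ insert (c + 1) T).card + 1 := by
      refine Finset.card_le_diff_of_interleaved ?_
      intro x hx y hy hxy _
      rcases Finset.mem_insert.1 hx with rfl | hxT
      · -- x = c + 1, y > x, y ∈ T impossible
        rcases Finset.mem_insert.1 hy with rfl | hyT
        · exact absurd hxy (lt_irrefl _)
        · exact absurd (hle _ hyT) (by push_neg; linarith)
      · rcases Finset.mem_insert.1 hy with rfl | hyT
        · -- y = c + 1 : use c
          exact ⟨c, hcZ, ⟨lt_of_le_of_lt (hle _ hxT) hcb, by linarith⟩⟩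
        · -- both in T : Rolle
          obtain ⟨z, hz, hz0⟩ := aux_rolle f r x y hxy (hTroot _ hxT) (hTroot _ hyT)
          exact ⟨z, Multiset.mem_toFinset.2 (by rw [mem_roots hgne]; exact hz0), hz⟩
    rw [Finset.card_insert_of_notMem hcT] at key
    have hsub : Z \ insert (c + 1) T ⊆ Z \ T :=
      Finset.sdiff_subset_sdiff (le_refl _) (Finset.subset_insert _ _)
    have := Finset.card_le_card hsub
    omega
  -- multiplicities
  have hmult : ∀ x ∈ T, f.roots.count x - 1 ≤ g.roots.count x := by
    intro x hx
    rw [count_roots, count_roots]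
    have hdvdf : (X - C x) ^ (rootMultiplicity x f - 1) ∣ f :=
      dvd_trans (pow_dvd_pow _ (Nat.sub_le _ _)) (pow_rootMultiplicity_dvd f x)
    have hdvdf' : (X - C x) ^ (rootMultiplicity x f - 1) ∣ derivative f := by
      have h1 : rootMultiplicity x f - 1 ≤ rootMultiplicity x (derivative f) :=
        rootMultiplicity_sub_one_le_derivative_rootMultiplicity f x
      exact dvd_trans (pow_dvd_pow _ h1) (pow_rootMultiplicity_dvd _ x)
    have hdvdg : (X - C x) ^ (rootMultiplicity x f - 1) ∣ g :=
      dvd_sub hdvdf' (Dvd.dvd.mul_left hdvdf _)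
    exact (le_rootMultiplicity_iff hgne).2 hdvdg
  -- assemble
  have hcount : ∀ x ∈ Z \ T, 1 ≤ g.roots.count x := by
    intro x hx
    have := (Finset.mem_sdiff.1 hx).1
    rw [hZ, Multiset.mem_toFinset] at this
    exact Multiset.one_le_count_iff_mem.2 this
  have aux_sum_count_le : ∀ (S : Finset ℝ) (M : Multiset ℝ),
      ∑ x ∈ S, M.count x ≤ Multiset.card M := by
    intro S M
    calc ∑ x ∈ S, M.count x ≤ ∑ x ∈ S ∪ M.toFinset, M.count x :=
          Finset.sum_le_sum_of_subset Finset.subset_union_left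
      _ = ∑ x ∈ M.toFinset, M.count x := by
          refine (Finset.sum_subset Finset.subset_union_right ?_).symm
          intro x _ hx
          simpa [Multiset.count_eq_zero] using fun hmem => hx (Multiset.mem_toFinset.2 hmem)
      _ = Multiset.card M := Multiset.toFinset_sum_count_eq M
  have h1 : ∑ x ∈ T, f.roots.count x = Multiset.card f.roots := Multiset.toFinset_sum_count_eq _
  have h3 : ∑ x ∈ T, f.roots.count x ≤ (∑ x ∈ T, g.roots.count x) + T.card := by
    calc ∑ x ∈ T, f.roots.count x ≤ ∑ x ∈ T, (g.roots.count x + 1) :=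
          Finset.sum_le_sum (fun x hx => by have := hmult x hx; omega)
      _ = (∑ x ∈ T, g.roots.count x) + T.card := by
          rw [Finset.sum_add_distrib, Finset.sum_const, smul_eq_mul, mul_one]
  have h4 : T.card ≤ ∑ x ∈ Z \ T, g.roots.count x := by
    calc T.card ≤ (Z \ T).card := hinterleave
      _ = ∑ x ∈ Z \ T, 1 := by rw [Finset.card_eq_sum_ones]
      _ ≤ ∑ x ∈ Z \ T, g.roots.count x := Finset.sum_le_sum hcount
  have h5 : (∑ x ∈ T, g.roots.count x) + ∑ x ∈ Z \ T, g.roots.count x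
      ≤ Multiset.card g.roots := by
    rw [← Finset.sum_union Finset.disjoint_sdiff]
    exact aux_sum_count_le _ _
  omega
theorem aux_core (f : ℝ[X]) (r : ℝ) (hf : f ≠ 0) (hs : f.Splits) :
    derivative f - C r * f = 0 ∨
      ((derivative f - C r * f) ≠ 0 ∧ (derivative f - C r * f).Splits) := by
  rcases lt_trichotomy r 0 with hr | hr | hr
  · -- negative case : comp (-X)
    right
    set f₂ : ℝ[X] := f.comp (-X) with hf₂
    have hcompcomp : ∀ p : ℝ[X], (p.comp (-X)).comp (-X) = p := by
      intro p
      rw [comp_assoc]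
      simp
    have hf₂ne : f₂ ≠ 0 := by
      intro h0
      apply hf
      rw [← hcompcomp f, ← hf₂, h0, zero_comp]
    have haev : ∀ (p : ℝ[X]) (z : ℂ), aeval z (p.comp (-X)) = aeval (-z) p := by
      intro p z
      rw [aeval_comp]
      simp
    have hf₂s : f₂.Splits := by
      refine aux_splits_of_real_roots _ hf₂ne ?_
      intro z hz
      rw [hf₂, haev] at hz
      have := aux_real_roots_of_splits f hf hs (-z) hz
      simpa using this
    obtain ⟨hg₂ne, hg₂s⟩ := aux_core_pos f₂ (-r) (by linarith) hf₂ne hf₂s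
    have hder : derivative f₂ = -((derivative f).comp (-X)) := by
      rw [hf₂, derivative_comp]
      simp
    have hg₂ : derivative f₂ - C (-r) * f₂ = -((derivative f - C r * f).comp (-X)) := by
      rw [hder, hf₂, sub_comp, mul_comp, C_comp, map_neg]
      ring
    set g := derivative f - C r * f with hgdef
    have hgne : g ≠ 0 := by
      intro h0
      apply hg₂ne
      rw [hg₂, h0, zero_comp, neg_zero]
    refine ⟨hgne, aux_splits_of_real_roots _ hgne ?_⟩
    intro z hz
    have hroot2 : aeval (-z) (derivative f₂ - C (-r) * f₂) = 0 := by
      rw [hg₂, map_neg, haev]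
      simp [hz]
    have := aux_real_roots_of_splits _ hg₂ne hg₂s (-z) hroot2
    simpa using this
  · -- r = 0 : derivative
    subst hr
    simp only [map_zero, zero_mul, sub_zero]
    by_cases hd : derivative f = 0
    · exact Or.inl hd
    · right
      refine ⟨hd, ?_⟩
      rw [splits_iff_card_roots]
      refine le_antisymm (card_roots' _) ?_
      have h1 := f.card_roots_le_derivative
      have h2 : Multiset.card f.roots = f.natDegree := splits_iff_card_roots.1 hs
      have h3 : f.natDegree ≠ 0 := by
        intro h0
        obtain ⟨c, rfl⟩ := natDegree_eq_zero.1 h0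
        simp at hd
      have h4 : (derivative f).natDegree = f.natDegree - 1 := natDegree_eq_of_degree_eq_some (by rw [degree_derivative_eq f (by omega)])
      omega
  · exact Or.inr (aux_core_pos f r hr hf hs)
theorem aux_reflect_splits_aux (s : Multiset ℝ) : ∀ (N : ℕ) (c : ℝ), s.card ≤ N →
    (reflect N (C c * (s.map fun t => X - C t).prod)).Splits := by
  induction s using Multiset.induction_on with
  | empty =>
    intro N c _
    simp only [Multiset.map_zero, Multiset.prod_zero, mul_one, reflect_C]
    exact Splits.mul (Splits.C _) (Splits.X_pow _)
  | cons t s ih =>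
    intro N c hN
    rw [Multiset.card_cons] at hN
    have hN1 : 1 ≤ N := by omega
    have hrw : C c * ((t ::ₘ s).map fun u => X - C u).prod
        = (X - C t) * (C c * (s.map fun u => X - C u).prod) := by
      rw [Multiset.map_cons, Multiset.prod_cons]
      ring
    rw [hrw]
    have hd1 : (X - C t : ℝ[X]).natDegree ≤ 1 := by
      simpa using natDegree_X_sub_C t
    have hd2 : (C c * (s.map fun u => X - C u).prod).natDegree ≤ N - 1 := by
      refine le_trans (natDegree_mul_le) ?_
      have : ((s.map fun u => X - C u).prod).natDegree ≤ s.card := by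
        refine le_trans (natDegree_multiset_prod_le _) ?_
        rw [Multiset.map_map]
        refine le_trans (Multiset.sum_le_card_nsmul _ 1 ?_) (by simp)
        intro x hx
        obtain ⟨u, _, rfl⟩ := Multiset.mem_map.1 hx
        simpa using natDegree_X_sub_C u
      simp only [natDegree_C, zero_add]
      omega
    have : reflect N ((X - C t) * (C c * (s.map fun u => X - C u).prod))
        = reflect 1 (X - C t) * reflect (N - 1) (C c * (s.map fun u => X - C u).prod) := by
      have := reflect_mul (X - C t) (C c * (s.map fun u => X - C u).prod) hd1 hd2
      rwa [show 1 + (N - 1) = N by omega] at this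
    rw [this]
    have hrefl1 : reflect 1 (X - C t) = C 1 * X ^ 0 - C t * X ^ 1 := by
      have hX : (X : ℝ[X]) = C 1 * X ^ 1 := by simp
      rw [reflect_sub, reflect_C, hX, reflect_C_mul_X_pow]
      simp
    refine Splits.mul (Splits.of_natDegree_le_one ?_) (ih (N - 1) c (by omega))
    rw [hrefl1]
    refine le_trans (natDegree_sub_le _ _) ?_
    simp [natDegree_C_mul_le]
    refine le_trans (natDegree_mul_le) (by simp)

theorem aux_reflect_splits (f : ℝ[X]) (N : ℕ) (hs : f.Splits)
    (hN : f.natDegree ≤ N) : (reflect N f).Splits := by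
  by_cases hf : f = 0
  · rw [hf, reflect_zero]
    exact Splits.zero
  have hfact := hs.eq_prod_roots
  rw [hfact]
  refine aux_reflect_splits_aux f.roots N f.leadingCoeff ?_
  calc (Multiset.card f.roots) ≤ f.natDegree := card_roots' f
    _ ≤ N := hN
theorem aux_fold (s : Multiset ℝ) (f : ℝ[X])
    (hf : f = 0 ∨ (f ≠ 0 ∧ f.Splits)) :
    (aeval (Polynomial.derivative : Module.End ℝ ℝ[X]) ((s.map fun t => X - C t).prod)) f = 0 ∨
      ((aeval (Polynomial.derivative : Module.End ℝ ℝ[X]) ((s.map fun t => X - C t).prod)) f ≠ 0 ∧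
        ((aeval (Polynomial.derivative : Module.End ℝ ℝ[X]) ((s.map fun t => X - C t).prod)) f).Splits) := by
  induction s using Multiset.induction_on generalizing f with
  | empty => simpa using hf
  | cons t s ih =>
    have hstep := ih f hf
    have hmul : (aeval (Polynomial.derivative : Module.End ℝ ℝ[X])
        (((t ::ₘ s).map fun u => X - C u).prod)) f
        = derivative ((aeval (Polynomial.derivative : Module.End ℝ ℝ[X])
            ((s.map fun u => X - C u).prod)) f)
          - C t * ((aeval (Polynomial.derivative : Module.End ℝ ℝ[X])
            ((s.map fun u => X - C u).prod)) f) := by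
    -- prod cons, map_mul, End.mul_apply
      rw [Multiset.map_cons, Multiset.prod_cons, map_mul, Module.End.mul_apply]
      rw [map_sub, aeval_X, aeval_C, LinearMap.sub_apply]
      congr 1
      rw [Module.algebraMap_end_apply, smul_eq_C_mul]
    rw [hmul]
    rcases hstep with h0 | ⟨hne, hs⟩
    · left; rw [h0]; simp
    · exact aux_core _ t hne hs
theorem aux_identity (m : ℕ) (a : ℕ → ℝ) :
    (aeval (Polynomial.derivative : Module.End ℝ ℝ[X])
        (reflect m (∑ k ∈ Finset.range (m + 1), C (a k) * X ^ k))) (X ^ m) =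
      C ((m.factorial : ℝ)) * ∑ k ∈ Finset.range (m + 1), C ((1 / k.factorial : ℝ) * a k) * X ^ k := by
  have hrefl : reflect m (∑ k ∈ Finset.range (m + 1), C (a k) * X ^ k)
      = ∑ k ∈ Finset.range (m + 1), C (a k) * X ^ (m - k) := by
    have := map_sum (AddMonoidHom.mk' (fun f : ℝ[X] => reflect m f)
      (fun f g => reflect_add f g m)) (fun k => C (a k) * X ^ k) (Finset.range (m + 1))
    rw [show reflect m (∑ k ∈ Finset.range (m + 1), C (a k) * X ^ k)
      = (AddMonoidHom.mk' (fun f : ℝ[X] => reflect m f)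
          (fun f g => reflect_add f g m)) (∑ k ∈ Finset.range (m + 1), C (a k) * X ^ k) from rfl,
      this]
    refine Finset.sum_congr rfl fun k hk => ?_
    show reflect m (C (a k) * X ^ k) = C (a k) * X ^ (m - k)
    rw [reflect_C_mul_X_pow, revAt_le (by simpa using Nat.lt_succ_iff.1 (Finset.mem_range.1 hk))]
  rw [hrefl, map_sum, LinearMap.sum_apply, Finset.mul_sum]
  refine Finset.sum_congr rfl fun k hk => ?_
  have hk' : k ≤ m := Nat.lt_succ_iff.1 (Finset.mem_range.1 hk)
  have h1 : aeval (Polynomial.derivative : Module.End ℝ ℝ[X]) (C (a k) * X ^ (m - k))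
      = (a k) • ((Polynomial.derivative : Module.End ℝ ℝ[X]) ^ (m - k)) := by
    rw [map_mul, aeval_C, map_pow, aeval_X, ← Algebra.smul_def]
  have hterm : (aeval (Polynomial.derivative : Module.End ℝ ℝ[X]) (C (a k) * X ^ (m - k)))
      (X ^ m : ℝ[X]) = (a k) • (Polynomial.derivative^[m - k] (X ^ m : ℝ[X])) := by
    rw [h1, LinearMap.smul_apply, Module.End.pow_apply]
  rw [hterm, Polynomial.iterate_derivative_X_pow_eq_smul m (m - k)]
  rw [show m - (m - k) = k by omega]
  have hfact : ((k.factorial : ℝ)) * ((m.descFactorial (m - k) : ℕ) : ℝ) = (m.factorial : ℝ) := by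
    have := Nat.factorial_mul_descFactorial (show m - k ≤ m by omega)
    rw [show m - (m - k) = k by omega] at this
    exact_mod_cast this
  rw [smul_smul, smul_eq_C_mul, ← mul_assoc, ← C_mul]
  congr 2
  have hkf : (k.factorial : ℝ) ≠ 0 := Nat.cast_ne_zero.2 k.factorial_ne_zero
  field_simp
  linear_combination a k * hfact
theorem stmt_5 (m : ℕ) (a : ℕ → ℝ)
    (h : ∀ z : ℂ, aeval z (∑ k ∈ Finset.range (m + 1), C (a k) * X ^ k) = 0 → z.im = 0) :
    (∑ k ∈ Finset.range (m + 1), C ((1 / k.factorial : ℝ) * a k) * X ^ k) = 0 ∨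
    ∀ z : ℂ, aeval z (∑ k ∈ Finset.range (m + 1),
        C ((1 / k.factorial : ℝ) * a k) * X ^ k) = 0 → z.im = 0 := by
  classical
  set p : ℝ[X] := ∑ k ∈ Finset.range (m + 1), C (a k) * X ^ k with hp
  set q : ℝ[X] := ∑ k ∈ Finset.range (m + 1), C ((1 / k.factorial : ℝ) * a k) * X ^ k with hq
  have hpne : p ≠ 0 := by
    intro h0
    have := h Complex.I (by rw [h0, map_zero])
    simp at this
  have hps : p.Splits := aux_splits_of_real_roots p hpne (fun z hz => h z hz)
  have hpdeg : p.natDegree ≤ m := by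
    rw [hp]
    refine natDegree_sum_le_of_forall_le _ _ fun k hk => ?_
    refine le_trans natDegree_mul_le ?_
    simp only [natDegree_C, natDegree_X_pow, zero_add]
    exact Nat.lt_succ_iff.1 (Finset.mem_range.1 hk)
  set P : ℝ[X] := reflect m p with hP
  have hPne : P ≠ 0 := fun h0 => hpne (reflect_eq_zero_iff.1 h0)
  have hPs : P.Splits := aux_reflect_splits p m hps hpdeg
  have hfact := hPs.eq_prod_roots
  have hXm : (X ^ m : ℝ[X]) = 0 ∨ ((X ^ m : ℝ[X]) ≠ 0 ∧ (X ^ m : ℝ[X]).Splits) :=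
    Or.inr ⟨pow_ne_zero _ X_ne_zero, Splits.X_pow _⟩
  have hfold := aux_fold P.roots (X ^ m) hXm
  set W : ℝ[X] := (aeval (Polynomial.derivative : Module.End ℝ ℝ[X])
      ((P.roots.map fun t => X - C t).prod)) (X ^ m) with hW
  have hlc : P.leadingCoeff ≠ 0 := leadingCoeff_ne_zero.2 hPne
  have hG : (aeval (Polynomial.derivative : Module.End ℝ ℝ[X]) P) (X ^ m)
      = P.leadingCoeff • W := by
    conv_lhs => rw [hfact]
    rw [map_mul, aeval_C, Module.End.mul_apply, Module.algebraMap_end_apply]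
  have hid := aux_identity m a
  rw [← hP, ← hq, hG] at hid
  rcases hfold with h0 | ⟨hne, hsW⟩
  · left
    rw [h0, smul_zero] at hid
    have : (C ((m.factorial : ℝ)) : ℝ[X]) ≠ 0 := by
      simpa using (Nat.cast_ne_zero (R := ℝ)).2 m.factorial_ne_zero
    rcases mul_eq_zero.1 hid.symm with hc | hq0
    · exact absurd hc this
    · exact hq0
  · right
    have hGne : P.leadingCoeff • W ≠ 0 := smul_ne_zero hlc hne
    have hGs : (P.leadingCoeff • W).Splits := by
      rw [smul_eq_C_mul]
      exact Splits.mul (Splits.C _) hsW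
    rw [hid] at hGne hGs
    have hqne : q ≠ 0 := by
      intro h0
      rw [h0, mul_zero] at hGne
      exact hGne rfl
    intro z hz
    have : aeval z (C ((m.factorial : ℝ)) * q) = 0 := by
      rw [map_mul, hz, mul_zero]
    exact aux_real_roots_of_splits _ hGne hGs z this
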